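/- For every finite vertex-transitive simple graph G, the product of the independence number and the clique number of G is at most the number of vertices of G: α(G)·ω(G) ≤ |V(G)|. -/

import Mathlib

open SimpleGraph

/-- The independence number of a graph: the maximum size of a set of
pairwise non-adjacent vertices. -/
noncomputable def indepNum' {V : Type*} (G : SimpleGraph V) : ℕ :=
  sSup {m | ∃ s : Finset V, s.card = m ∧ ∀ a ∈ s, ∀ b ∈ s, a ≠ b → ¬G.Adj a b}

attribute [local instance] Classical.propDecidable

noncomputable instance autFintype {V : Type*} [Fintype V] (G : SimpleGraph V) :
    Fintype (G ≃g G) :=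
  @Fintype.ofFinite _ (Finite.of_injective (fun e => (e : V → V)) DFunLike.coe_injective)

/-- Fibers of evaluation maps on the automorphism group are equinumerous. -/
lemma fiber_card_eq {V : Type*} [Fintype V] (G : SimpleGraph V)
    (htrans : ∀ u v : V, ∃ e : G ≃g G, e u = v) (a b a' b' : V) :
    Fintype.card {g : G ≃g G // g a = b} = Fintype.card {g : G ≃g G // g a' = b'} := by
  obtain ⟨e, he⟩ := htrans a' a
  obtain ⟨f, hf⟩ := htrans b b'
  refine Fintype.card_congr ⟨fun g => ⟨(e.trans g.1).trans f, ?_⟩,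
    fun g => ⟨(e.symm.trans g.1).trans f.symm, ?_⟩, ?_, ?_⟩
  · simp [he, g.2, hf]
  · have : e.symm a = a' := by rw [← he]; exact e.symm_apply_apply a'
    have : f.symm b' = b := by rw [← hf]; exact f.symm_apply_apply b
    simp_all [g.2]
  · intro g; ext x; simp
  · intro g; ext x; simp

/-- For a finite vertex-transitive graph, `α(G) * ω(G) ≤ |V(G)|`. -/
theorem stmt_11 {V : Type*} [Fintype V] (G : SimpleGraph V)
    (htrans : ∀ u v : V, ∃ e : G ≃g G, e u = v) :
    indepNum' G * G.cliqueNum ≤ Fintype.card V := by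
  have hindep_le : indepNum' G ≤ Fintype.card V := by
    refine csSup_le ⟨0, ∅, by simp⟩ ?_
    rintro m ⟨s, hs, -⟩
    exact hs ▸ s.card_le_univ
  rcases isEmpty_or_nonempty V with hV | hV
  · have h0 : Fintype.card V = 0 := Fintype.card_eq_zero
    have : indepNum' G = 0 := le_antisymm (h0 ▸ hindep_le) (Nat.zero_le _)
    simp [this, h0]
  -- obtain a maximum independent set S
  have hbdd : BddAbove {m | ∃ s : Finset V, s.card = m ∧
      ∀ a ∈ s, ∀ b ∈ s, a ≠ b → ¬G.Adj a b} := by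
    refine ⟨Fintype.card V, ?_⟩
    rintro m ⟨s, hs, -⟩
    exact hs ▸ s.card_le_univ
  have hmem : indepNum' G ∈ {m | ∃ s : Finset V, s.card = m ∧
      ∀ a ∈ s, ∀ b ∈ s, a ≠ b → ¬G.Adj a b} := by
    refine Nat.sSup_mem ⟨0, ∅, by simp⟩ hbdd
  obtain ⟨S, hScard, hSind⟩ := hmem
  -- obtain a maximum clique K
  obtain ⟨K, hKclique⟩ := G.exists_isNClique_cliqueNum
  obtain ⟨hKcl, hKcard⟩ := hKclique
  -- the common fiber size c
  obtain ⟨v₀⟩ := hV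
  set c := Fintype.card {g : G ≃g G // g v₀ = v₀} with hc
  have hcpos : 0 < c := Fintype.card_pos_iff.mpr ⟨⟨RelIso.refl _, rfl⟩⟩
  -- card of automorphism group is n * c
  have hΓ : Fintype.card (G ≃g G) = Fintype.card V * c := by
    have := Fintype.card_congr (Equiv.sigmaFiberEquiv (fun g : G ≃g G => g v₀)).symm
    rw [this, Fintype.card_sigma]
    rw [Finset.sum_congr rfl (fun v _ => fiber_card_eq G htrans v₀ v v₀ v₀)]
    simp [mul_comm]
    exact Or.inl (Fintype.card_congr (Equiv.refl _))
  -- the double-counting type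
  let X := (p : {x // x ∈ S} × {x // x ∈ K}) × {g : G ≃g G // g (p.2 : V) = (p.1 : V)}
  have hX : Fintype.card X = S.card * K.card * c := by
    rw [Fintype.card_sigma]
    rw [Finset.sum_congr rfl (fun p _ => fiber_card_eq G htrans (p.2 : V) (p.1 : V) v₀ v₀)]
    simp [Fintype.card_prod, mul_assoc]
    exact Or.inl (Or.inl (Fintype.card_congr (Equiv.refl _)))
  -- injection X → Aut(G)
  have hinj : Function.Injective (fun x : X => (x.2 : G ≃g G)) := by
    rintro ⟨⟨v, k⟩, g, hg⟩ ⟨⟨v', k'⟩, g', hg'⟩ h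
    simp only [Subtype.coe_mk] at h
    subst h
    have hkk' : k = k' := by
      by_contra hne
      have hne' : (k : V) ≠ (k' : V) := fun h => hne (Subtype.ext h)
      have hadj : G.Adj (k : V) (k' : V) := hKcl k.2 k'.2 hne'
      have hadj' : G.Adj (g k) (g k') := g.map_rel_iff.mpr hadj
      rw [hg, hg'] at hadj'
      exact hSind _ v.2 _ v'.2 hadj'.ne hadj'
    subst hkk'
    have hvv' : v = v' := Subtype.ext (hg ▸ hg' ▸ rfl)
    subst hvv'
    rfl
  have hle : Fintype.card X ≤ Fintype.card (G ≃g G) :=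
    Fintype.card_le_of_injective _ hinj
  rw [hX, hΓ] at hle
  have := Nat.le_of_mul_le_mul_right hle hcpos
  rwa [hScard, hKcard] at this
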